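/- arXiv:1803.03250 — 3 statements merged into one kernel-verified Lean document; each statement's English description precedes it below -/
import Mathlib

section
/- Let L = L₀ ⊕ L₀ ⊕ U ⊕ U ⊕ U with involution τ(x,y,z₁,z₂,z₃) = (y,x,z₂,z₁,−z₃), and let Λ = ℤ ⊕ L ⊕ ℤ be the Mukai lattice, with τ extended to Λ by acting as the identity on the two ℤ factors. Let β = e + f in the third U summand (so τβ = −β and ⟨β,β⟩ = 2), and define T = e^β ∘ τ on Λ⊗ℚ, where e^β(r,c,s) = (r, c + rβ, s + ⟨c,β⟩ + r). Then T maps the integral Mukai lattice Λ into itself and is an involutive isometry of Λ. -/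
/-- The hyperbolic plane form on `U = ℤ × ℤ`. -/
def Ubil (z w : ℤ × ℤ) : ℤ := z.1 * w.2 + z.2 * w.1

/-- The lattice `L = L₀ ⊕ L₀ ⊕ U ⊕ U ⊕ U`. -/
abbrev LatE (L₀ : Type*) := L₀ × L₀ × (ℤ × ℤ) × (ℤ × ℤ) × (ℤ × ℤ)

/-- The orthogonal direct sum form on `L = L₀ ⊕ L₀ ⊕ U ⊕ U ⊕ U`. -/
def Lbil {L₀ : Type*} [AddCommGroup L₀] [Module ℤ L₀]
    (B₀ : L₀ →ₗ[ℤ] L₀ →ₗ[ℤ] ℤ) (a b : LatE L₀) : ℤ :=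
  B₀ a.1 b.1 + B₀ a.2.1 b.2.1 + Ubil a.2.2.1 b.2.2.1 +
    Ubil a.2.2.2.1 b.2.2.2.1 + Ubil a.2.2.2.2 b.2.2.2.2

/-- The involution `τ(x,y,z₁,z₂,z₃) = (y,x,z₂,z₁,−z₃)`. -/
def tauL {L₀ : Type*} [AddCommGroup L₀] (a : LatE L₀) : LatE L₀ :=
  (a.2.1, a.1, a.2.2.2.1, a.2.2.1, -a.2.2.2.2)

/-- The Mukai lattice `Λ = ℤ ⊕ L ⊕ ℤ`. -/
abbrev Muk (L₀ : Type*) := ℤ × LatE L₀ × ℤ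

/-- The Mukai pairing `⟨(r,c,s),(r',c',s')⟩ = ⟨c,c'⟩ − rs' − r's`. -/
def mukai {L₀ : Type*} [AddCommGroup L₀] [Module ℤ L₀]
    (B₀ : L₀ →ₗ[ℤ] L₀ →ₗ[ℤ] ℤ) (v w : Muk L₀) : ℤ :=
  Lbil B₀ v.2.1 w.2.1 - v.1 * w.2.2 - w.1 * v.2.2

/-- The B-field `β = e + f` in the third `U` summand. -/
def betaL (L₀ : Type*) [AddCommGroup L₀] : LatE L₀ :=
  (0, 0, 0, 0, (1, 1))

/-- `T = e^β ∘ τ` on the Mukai lattice, where `e^β(r,c,s) = (r, c + rβ, s + ⟨c,β⟩ + r)`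
(using `⟨β,β⟩ = 2`). -/
def Tmuk {L₀ : Type*} [AddCommGroup L₀] [Module ℤ L₀]
    (B₀ : L₀ →ₗ[ℤ] L₀ →ₗ[ℤ] ℤ) (v : Muk L₀) : Muk L₀ :=
  (v.1, tauL v.2.1 + v.1 • betaL L₀,
    v.2.2 + Lbil B₀ (tauL v.2.1) (betaL L₀) + v.1)

/-- `T = e^β ∘ τ` maps the integral Mukai lattice to itself and is an involutive isometry. -/
theorem Tmuk_involutive_isometry {L₀ : Type*} [AddCommGroup L₀] [Module ℤ L₀]
    (B₀ : L₀ →ₗ[ℤ] L₀ →ₗ[ℤ] ℤ)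
    (hsymm : ∀ a b, B₀ a b = B₀ b a)
    (heven : ∀ a, Even (B₀ a a)) :
    (∀ v : Muk L₀, Tmuk B₀ (Tmuk B₀ v) = v) ∧
    (∀ v w : Muk L₀, mukai B₀ (Tmuk B₀ v) (Tmuk B₀ w) = mukai B₀ v w) := by
  constructor
  · rintro ⟨r, ⟨x, y, ⟨a1,b1⟩, ⟨a2,b2⟩, ⟨a3,b3⟩⟩, s⟩
    simp only [Tmuk, tauL, betaL, Lbil, Ubil, Prod.mk.injEq, Prod.ext_iff,
      Prod.fst_add, Prod.snd_add, Prod.smul_mk, smul_zero, smul_eq_mul,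
      Prod.mk_add_mk, Prod.neg_mk, Prod.fst_zero, Prod.snd_zero, add_zero,
      zero_add, neg_add_rev, neg_neg]
    and_intros <;> simp [zsmul_zero] <;> ring
  · rintro ⟨r, ⟨x, y, ⟨a1,b1⟩, ⟨a2,b2⟩, ⟨a3,b3⟩⟩, s⟩ ⟨r', ⟨x', y', ⟨a1',b1'⟩, ⟨a2',b2'⟩, ⟨a3',b3'⟩⟩, s'⟩
    simp only [Tmuk, tauL, betaL, Lbil, Ubil, mukai, Prod.fst_add, Prod.snd_add,
      Prod.smul_mk, smul_zero, smul_eq_mul, Prod.mk_add_mk, Prod.neg_mk,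
      Prod.fst_zero, Prod.snd_zero, map_zero, add_zero, zero_add]
    simp only [smul_zero, zsmul_zero, add_zero]; ring
end

section
/- In the setting of the Mukai lattice Λ with T = e^β ∘ τ as above, every T-invariant vector v ∈ Λ satisfies ⟨(0,0,1), v⟩ ≡ ⟨v, v⟩ (mod 4), where (0,0,1) denotes the vector with r = 0, c = 0, s = 1. -/
/-- Every `T`-invariant `v ∈ Λ` satisfies `⟨(0,0,1), v⟩ ≡ ⟨v,v⟩ (mod 4)`. -/
theorem char_vector_mod_four {L₀ : Type*} [AddCommGroup L₀] [Module ℤ L₀]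
    (B₀ : L₀ →ₗ[ℤ] L₀ →ₗ[ℤ] ℤ)
    (hsymm : ∀ a b, B₀ a b = B₀ b a)
    (heven : ∀ a, Even (B₀ a a)) :
    ∀ v : Muk L₀, Tmuk B₀ v = v →
      (4 : ℤ) ∣ (mukai B₀ ((0 : ℤ), (0 : LatE L₀), (1 : ℤ)) v - mukai B₀ v v) := by
  rintro ⟨r, ⟨x, y, z1, z2, z3⟩, s⟩ h
  simp only [Tmuk, tauL, betaL, Lbil, Ubil, Prod.mk.injEq, Prod.ext_iff, Prod.fst_add,
    Prod.snd_add, Prod.smul_mk, smul_zero, smul_eq_mul, mul_one, Prod.mk_add_mk,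
    add_zero, Prod.fst_neg, Prod.snd_neg] at h
  obtain ⟨-, ⟨hyx, -, ⟨h21, h22⟩, -, hz31, hz32⟩, -⟩ := h
  subst hyx
  obtain ⟨z21,z22⟩ := z2
  obtain ⟨z11,z12⟩ := z1
  simp only at h21 h22
  subst h21 h22
  obtain ⟨m, hm⟩ := heven y
  obtain ⟨t, ht⟩ := Int.even_mul_succ_self z3.1
  have hr : r = 2 * z3.1 := by omega
  subst hr
  simp only [mukai, Lbil, Ubil, betaL, map_zero, LinearMap.zero_apply, Prod.fst_zero, Prod.snd_zero, zsmul_zero, add_zero]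
  refine ⟨-m - z21 * z22 - t + z3.1 * s, ?_⟩
  have hz : z3.2 = z3.1 := by omega
  rw [hz]
  linear_combination -2 * hm - 2 * ht
end

section
/- Let Λ be the Mukai lattice ℤ ⊕ L ⊕ ℤ with L = L₀ ⊕ L₀ ⊕ U ⊕ U ⊕ U and T = e^β ∘ τ as above (β = e+f in the third U, L₀ even), and let φ : Λ → Λ be an isometry of the Mukai pairing commuting with T. Then for every ℓ ∈ L embedded as (0, ℓ, 0), the pairing ⟨φ(0,0,1), (0,ℓ,0)⟩ is even; equivalently, the L-component of φ(0,0,1) pairs evenly with all of L. -/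
/-- Key parity fact: for any `v = (r, c, s)` in the Mukai lattice,
`⟨v, T v⟩ ≡ r (mod 2)`. -/
theorem mukai_self_T_parity {L₀ : Type*} [AddCommGroup L₀] [Module ℤ L₀]
    (B₀ : L₀ →ₗ[ℤ] L₀ →ₗ[ℤ] ℤ) (hsymm : ∀ a b, B₀ a b = B₀ b a)
    (v : Muk L₀) : Even (mukai B₀ v (Tmuk B₀ v) + v.1) := by
  obtain ⟨r, ⟨x, y, z1, z2, z3⟩, s⟩ := v
  obtain ⟨k, hk⟩ := Int.even_mul_succ_self (r - 1)
  refine ⟨B₀ x y + (z1.1 * z2.2 + z1.2 * z2.1) + r * (z3.1 + z3.2)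
      - z3.1 * z3.2 - r * s - k, ?_⟩
  simp only [mukai, Tmuk, tauL, betaL, Lbil, Ubil, Prod.fst_add, Prod.snd_add,
    Prod.smul_mk, smul_eq_mul, mul_one, mul_zero, smul_zero, add_zero, zero_add,
    Prod.fst_neg, Prod.snd_neg, map_zero, LinearMap.zero_apply, map_add, map_neg,
    LinearMap.add_apply, LinearMap.neg_apply, Prod.fst_zero, Prod.snd_zero]
  simp only [zsmul_zero, smul_zero, map_zero, LinearMap.zero_apply, add_zero]
  linear_combination hsymm y x - hk

/-- If `φ` is an isometry of the Mukai lattice commuting with `T = e^β ∘ τ`, then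
`⟨φ(0,0,1), (0,ℓ,0)⟩` is even for all `ℓ ∈ L`. -/
theorem degree_two_part_even {L₀ : Type*} [AddCommGroup L₀] [Module ℤ L₀]
    (B₀ : L₀ →ₗ[ℤ] L₀ →ₗ[ℤ] ℤ)
    (hsymm : ∀ a b, B₀ a b = B₀ b a)
    (heven : ∀ a, Even (B₀ a a))
    (φ : Muk L₀ ≃ₗ[ℤ] Muk L₀)
    (hφ : ∀ v w, mukai B₀ (φ v) (φ w) = mukai B₀ v w)
    (hcomm : ∀ v, φ (Tmuk B₀ v) = Tmuk B₀ (φ v)) :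
    ∀ ℓ : LatE L₀,
      Even (mukai B₀ (φ ((0 : ℤ), (0 : LatE L₀), (1 : ℤ))) ((0 : ℤ), ℓ, (0 : ℤ))) := by
  intro ℓ
  set u := φ.symm ((0 : ℤ), ℓ, (0 : ℤ)) with hu
  have h1 : φ u = ((0 : ℤ), ℓ, (0 : ℤ)) := φ.apply_symm_apply _
  have h2 : φ (Tmuk B₀ u) = Tmuk B₀ ((0 : ℤ), ℓ, (0 : ℤ)) := by
    rw [hcomm, h1]
  have h3 : mukai B₀ (φ ((0 : ℤ), (0 : LatE L₀), (1 : ℤ))) ((0 : ℤ), ℓ, (0 : ℤ))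
      = -u.1 := by
    rw [← h1, hφ]
    simp [mukai, Lbil, Ubil, Prod.fst_zero, Prod.snd_zero]
  have h5 : mukai B₀ u (Tmuk B₀ u)
      = mukai B₀ ((0 : ℤ), ℓ, (0 : ℤ)) (Tmuk B₀ ((0 : ℤ), ℓ, (0 : ℤ))) := by
    rw [← hφ u (Tmuk B₀ u), h1, h2]
  have h6 : Even (mukai B₀ ((0 : ℤ), ℓ, (0 : ℤ)) (Tmuk B₀ ((0 : ℤ), ℓ, (0 : ℤ)))) := by
    simpa using mukai_self_T_parity B₀ hsymm ((0 : ℤ), ℓ, (0 : ℤ))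
  have h4 : Even (mukai B₀ u (Tmuk B₀ u) + u.1) := mukai_self_T_parity B₀ hsymm u
  have h7 : Even u.1 := by
    have := h4.sub (h5 ▸ h6)
    simpa using this
  rw [h3]
  exact h7.neg
end
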